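/- The equation ∫_δ^∞ s^{−n−1}[h(s) + rK] ds = 0 has a solution δ† > 0 if and only if h(0) + rK < 0; in that case the solution is unique, and it satisfies h(x) + rK < 0 for every x ∈ (0, δ†]. -/

import Mathlib

open MeasureTheory Set Filter Topology

set_option linter.unusedVariables false

/-- `h(0) := lim_{x↓0} h(x) ∈ [-∞, ∞)`; for a right-continuous increasing `h` this is the
infimum of `h` over `(0, ∞)`, viewed in the extended reals. -/
noncomputable def hZero (h : ℝ → ℝ) : EReal := ⨅ x ∈ Set.Ioi (0 : ℝ), (h x : EReal)

/-- The particular solution `R_h` to the ODE `σ²x²w'' + bxw' - rw + h = 0`. -/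
noncomputable def Rh (σ m n : ℝ) (h : ℝ → ℝ) (x : ℝ) : ℝ :=
  (1 / (σ ^ 2 * (n - m))) *
    (x ^ m * (∫ s in Set.Ioc (0 : ℝ) x, s ^ (-m - 1) * h s)
      + x ^ n * ∫ s in Set.Ioi x, s ^ (-n - 1) * h s)

theorem statement_14
    (r b σ m n : ℝ) (h : ℝ → ℝ)
    (hr : 0 < r) (hσ : σ ≠ 0) (hm : m < 0) (hn : 0 < n)
    (hmRoot : σ ^ 2 * m ^ 2 + (b - σ ^ 2) * m - r = 0)
    (hnRoot : σ ^ 2 * n ^ 2 + (b - σ ^ 2) * n - r = 0)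
    (hMono : MonotoneOn h (Set.Ioi 0))
    (hRC : ∀ x : ℝ, 0 < x → ContinuousWithinAt h (Set.Ici x) x)
    (hTop : Tendsto h atTop atTop)
    (hIntZero : ∀ x : ℝ, 0 < x →
      IntegrableOn (fun s : ℝ => s ^ (-m - 1) * h s) (Set.Ioc 0 x))
    (hIntTop : ∀ x : ℝ, 0 < x →
      IntegrableOn (fun s : ℝ => s ^ (-n - 1) * h s) (Set.Ioi x))
    (K : ℝ) :
    ((∃ δ : ℝ, 0 < δ ∧ (∫ s in Set.Ioi δ, s ^ (-n - 1) * (h s + r * K)) = 0) ↔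
      hZero h + ((r * K : ℝ) : EReal) < 0) ∧
    (∀ δ δ' : ℝ, 0 < δ → (∫ s in Set.Ioi δ, s ^ (-n - 1) * (h s + r * K)) = 0 →
      0 < δ' → (∫ s in Set.Ioi δ', s ^ (-n - 1) * (h s + r * K)) = 0 → δ = δ') ∧
    (∀ δ : ℝ, 0 < δ → (∫ s in Set.Ioi δ, s ^ (-n - 1) * (h s + r * K)) = 0 →
      ∀ x : ℝ, 0 < x → x ≤ δ → h x + r * K < 0) := by
  have hexp : -n - 1 < -1 := by linarith
  set f : ℝ → ℝ := fun s => s ^ (-n - 1) * (h s + r * K) with hfdef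
  -- integrability of f on Ioi δ
  have hrpow_int : ∀ δ : ℝ, 0 < δ → IntegrableOn (fun s : ℝ => s ^ (-n - 1)) (Set.Ioi δ) :=
    fun δ hδ => integrableOn_Ioi_rpow_of_lt hexp hδ
  have hfi : ∀ δ : ℝ, 0 < δ → IntegrableOn f (Set.Ioi δ) := by
    intro δ hδ
    have h1 := hIntTop δ hδ
    have h2 : IntegrableOn (fun s : ℝ => s ^ (-n - 1) * (r * K)) (Set.Ioi δ) :=
      (hrpow_int δ hδ).mul_const (r * K)
    exact IntegrableOn.congr_fun (h1.add h2) (fun s _ => by simp [hfdef]; ring) measurableSet_Ioi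
  -- tail lower bound
  obtain ⟨M, hM⟩ : ∃ M : ℝ, ∀ s : ℝ, s ≥ M → 1 ≤ h s + r * K := by
    obtain ⟨M, hM⟩ := eventually_atTop.1 (hTop.eventually_ge_atTop (1 - r * K))
    exact ⟨M, fun s hs => by linarith [hM s hs]⟩
  -- positivity of the tail integral when the integrand is nonnegative
  have hpos : ∀ δ : ℝ, 0 < δ → (∀ s ∈ Set.Ioi δ, 0 ≤ h s + r * K) →
      0 < ∫ s in Set.Ioi δ, f s := by
    intro δ hδ hnn
    have hnn' : 0 ≤ᵐ[volume.restrict (Set.Ioi δ)] f := by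
      refine (ae_restrict_iff' measurableSet_Ioi).2 (ae_of_all _ fun s hs => ?_)
      have hs0 : (0 : ℝ) < s := lt_trans hδ hs
      exact mul_nonneg (Real.rpow_nonneg hs0.le _) (hnn s hs)
    rw [setIntegral_pos_iff_support_of_nonneg_ae hnn' (hfi δ hδ)]
    have hsub : Set.Ioi (max δ M) ⊆ Function.support f ∩ Set.Ioi δ := by
      intro s hs
      have hsδ : δ < s := lt_of_le_of_lt (le_max_left _ _) hs
      have hsM : M ≤ s := le_of_lt (lt_of_le_of_lt (le_max_right _ _) hs)
      have hs0 : (0 : ℝ) < s := lt_trans hδ hsδ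
      refine ⟨?_, hsδ⟩
      have : 0 < f s :=
        mul_pos (Real.rpow_pos_of_pos hs0 _) (by linarith [hM s hsM])
      exact fun hc => by simp [hc] at this
    calc (0 : ENNReal) < volume (Set.Ioi (max δ M)) := by simp [Real.volume_Ioi]
      _ ≤ volume (Function.support f ∩ Set.Ioi δ) := measure_mono hsub
  -- split the integral
  have hsplit : ∀ δ δ' : ℝ, 0 < δ → δ ≤ δ' →
      (∫ s in Set.Ioi δ, f s)
        = (∫ s in Set.Ioc δ δ', f s) + ∫ s in Set.Ioi δ', f s := by
    intro δ δ' hδ hle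
    rw [← Set.Ioc_union_Ioi_eq_Ioi hle]
    exact setIntegral_union Set.Ioc_disjoint_Ioi_same measurableSet_Ioi
      ((hfi δ hδ).mono_set Set.Ioc_subset_Ioi_self)
      ((hfi δ' (lt_of_lt_of_le hδ hle)).mono_set (Set.Subset.refl _))
  -- claim 3
  have key3 : ∀ δ : ℝ, 0 < δ → (∫ s in Set.Ioi δ, f s) = 0 →
      ∀ x : ℝ, 0 < x → x ≤ δ → h x + r * K < 0 := by
    intro δ hδ hF x hx hxδ
    by_contra hcon
    push_neg at hcon
    have hnn : ∀ s ∈ Set.Ioi δ, 0 ≤ h s + r * K := by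
      intro s hs
      have hs0 : (0 : ℝ) < s := lt_trans hδ hs
      have : h x ≤ h s := hMono (Set.mem_Ioi.2 hx) (Set.mem_Ioi.2 hs0)
        (le_of_lt (lt_of_le_of_lt hxδ hs))
      linarith
    exact absurd hF (ne_of_gt (hpos δ hδ hnn))
  -- negativity of middle integral
  have hmid : ∀ δ δ' : ℝ, 0 < δ → δ < δ' → (∀ s ∈ Set.Ioc δ δ', h s + r * K < 0) →
      (∫ s in Set.Ioc δ δ', f s) < 0 := by
    intro δ δ' hδ hlt hneg
    have hδ' : 0 < δ' := lt_trans hδ hlt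
    have hint : IntegrableOn f (Set.Ioc δ δ') :=
      (hfi δ hδ).mono_set Set.Ioc_subset_Ioi_self
    have hnn' : 0 ≤ᵐ[volume.restrict (Set.Ioc δ δ')] (fun s => -f s) := by
      refine (ae_restrict_iff' measurableSet_Ioc).2 (ae_of_all _ fun s hs => ?_)
      have hs0 : (0 : ℝ) < s := lt_trans hδ hs.1
      have : f s < 0 := mul_neg_of_pos_of_neg (Real.rpow_pos_of_pos hs0 _) (hneg s hs)
      show (0 : ℝ) ≤ -f s
      linarith
    have hposneg : 0 < ∫ s in Set.Ioc δ δ', -f s := by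
      rw [setIntegral_pos_iff_support_of_nonneg_ae hnn' hint.neg]
      have hsub : Set.Ioc δ δ' ⊆ Function.support (fun s => -f s) ∩ Set.Ioc δ δ' := by
        intro s hs
        have hs0 : (0 : ℝ) < s := lt_trans hδ hs.1
        have : f s < 0 := mul_neg_of_pos_of_neg (Real.rpow_pos_of_pos hs0 _) (hneg s hs)
        exact ⟨fun hc => by simp only [neg_eq_zero] at hc; exact absurd hc (ne_of_lt this), hs⟩
      calc (0 : ENNReal) < volume (Set.Ioc δ δ') := by
            simp [Real.volume_Ioc, ENNReal.ofReal_pos]; linarith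
        _ ≤ _ := measure_mono hsub
    rw [integral_neg] at hposneg
    linarith
  -- uniqueness for δ < δ'
  have key2' : ∀ δ δ' : ℝ, 0 < δ → δ < δ' → (∫ s in Set.Ioi δ, f s) = 0 →
      (∫ s in Set.Ioi δ', f s) = 0 → False := by
    intro δ δ' hδ hlt hF hF'
    have hδ' : 0 < δ' := lt_trans hδ hlt
    have := hsplit δ δ' hδ (le_of_lt hlt)
    rw [hF, hF'] at this
    have hmid0 : (∫ s in Set.Ioc δ δ', f s) = 0 := by linarith
    have hneg : ∀ s ∈ Set.Ioc δ δ', h s + r * K < 0 := by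
      intro s hs
      exact key3 δ' hδ' hF' s (lt_trans hδ hs.1) hs.2
    exact absurd hmid0 (ne_of_lt (hmid δ δ' hδ hlt hneg))
  refine ⟨?_, ?_, fun δ hδ hF x hx hxδ => key3 δ hδ hF x hx hxδ⟩
  · constructor
    · rintro ⟨δ, hδ, hF⟩
      have h1 : h δ + r * K < 0 := key3 δ hδ hF δ hδ le_rfl
      have h2 : hZero h ≤ ((h δ : ℝ) : EReal) := iInf₂_le δ (Set.mem_Ioi.2 hδ)
      calc hZero h + ((r * K : ℝ) : EReal)
          ≤ ((h δ : ℝ) : EReal) + ((r * K : ℝ) : EReal) := add_le_add_left h2 _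
        _ = ((h δ + r * K : ℝ) : EReal) := (EReal.coe_add _ _).symm
        _ < 0 := by exact_mod_cast h1
    · intro hlt
      -- extract x₀ with h x₀ + r K < 0
      have hlt' : hZero h < ((-(r * K) : ℝ) : EReal) := by
        by_contra hc
        push_neg at hc
        have : ((-(r * K) : ℝ) : EReal) + ((r * K : ℝ) : EReal)
            ≤ hZero h + ((r * K : ℝ) : EReal) := add_le_add_left hc _
        rw [← EReal.coe_add] at this
        simp only [neg_add_cancel, EReal.coe_zero] at this
        exact absurd (lt_of_le_of_lt this hlt) (lt_irrefl _)
      rw [hZero] at hlt'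
      simp only [iInf_lt_iff] at hlt'
      obtain ⟨x₀, hx₀mem, hx₀lt⟩ := hlt'
      have hx₀ : (0 : ℝ) < x₀ := hx₀mem
      have hc₀ : h x₀ + r * K < 0 := by
        have := EReal.coe_lt_coe_iff.1 hx₀lt
        linarith
      set c₀ : ℝ := h x₀ + r * K with hc₀def
      set u : ℝ := ∫ s in Set.Ioi x₀, f s with hudef
      set T : ℝ := max (x₀ ^ (-n) + (n * u + 1) / (-c₀)) (x₀ ^ (-n)) with hTdef
      have hx₀pow : (0 : ℝ) < x₀ ^ (-n) := Real.rpow_pos_of_pos hx₀ _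
      have hT1 : (0 : ℝ) < T + 1 := by
        have := le_max_right (x₀ ^ (-n) + (n * u + 1) / (-c₀)) (x₀ ^ (-n))
        linarith
      set a : ℝ := (T + 1) ^ (-n⁻¹) with hadef
      have ha : (0 : ℝ) < a := Real.rpow_pos_of_pos hT1 _
      have hapow : a ^ (-n) = T + 1 := by
        have h1 : (-n⁻¹) * (-n) = 1 := by field_simp
        calc a ^ (-n) = ((T + 1) ^ (-n⁻¹)) ^ (-n) := rfl
          _ = (T + 1) ^ ((-n⁻¹) * (-n)) := (Real.rpow_mul hT1.le _ _).symm
          _ = (T + 1) ^ (1 : ℝ) := by rw [h1]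
          _ = T + 1 := Real.rpow_one _
      have hax₀ : a < x₀ := by
        have hlt2 : x₀ ^ (-n) < a ^ (-n) := by
          rw [hapow]
          have := le_max_right (x₀ ^ (-n) + (n * u + 1) / (-c₀)) (x₀ ^ (-n))
          linarith
        have := (Real.rpow_lt_rpow_iff_of_neg hx₀ ha (by linarith : -n < 0)).1 hlt2
        exact this
      -- bound the middle integral
      have hIval : (∫ s in Set.Ioc a x₀, (s : ℝ) ^ (-n - 1))
          = (T + 1 - x₀ ^ (-n)) / n := by
        rw [← intervalIntegral.integral_of_le hax₀.le]
        rw [integral_rpow (Or.inr ⟨by linarith, Set.notMem_uIcc_of_lt ha hx₀⟩)]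
        rw [show -n - 1 + 1 = -n by ring, hapow]
        rw [div_eq_div_iff (neg_ne_zero.2 (ne_of_gt hn)) (ne_of_gt hn)]
        ring
      have hbound : (∫ s in Set.Ioc a x₀, f s)
          ≤ c₀ * ((T + 1 - x₀ ^ (-n)) / n) := by
        have hint1 : IntegrableOn f (Set.Ioc a x₀) :=
          (hfi a ha).mono_set Set.Ioc_subset_Ioi_self
        have hint2 : IntegrableOn (fun s : ℝ => c₀ * s ^ (-n - 1)) (Set.Ioc a x₀) :=
          ((hrpow_int a ha).mono_set Set.Ioc_subset_Ioi_self).const_mul c₀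
        have hmono2 : ∀ s ∈ Set.Ioc a x₀, f s ≤ c₀ * s ^ (-n - 1) := by
          intro s hs
          have hs0 : (0 : ℝ) < s := lt_trans ha hs.1
          have hhs : h s ≤ h x₀ := hMono (Set.mem_Ioi.2 hs0) (Set.mem_Ioi.2 hx₀) hs.2
          have hgs : h s + r * K ≤ c₀ := by rw [hc₀def]; linarith
          calc f s = s ^ (-n - 1) * (h s + r * K) := rfl
            _ ≤ s ^ (-n - 1) * c₀ :=
              mul_le_mul_of_nonneg_left hgs (Real.rpow_nonneg hs0.le _)
            _ = c₀ * s ^ (-n - 1) := mul_comm _ _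
        calc (∫ s in Set.Ioc a x₀, f s)
            ≤ ∫ s in Set.Ioc a x₀, c₀ * s ^ (-n - 1) :=
              setIntegral_mono_on hint1 hint2 measurableSet_Ioc hmono2
          _ = c₀ * ∫ s in Set.Ioc a x₀, (s : ℝ) ^ (-n - 1) := integral_const_mul _ _
          _ = c₀ * ((T + 1 - x₀ ^ (-n)) / n) := by rw [hIval]
      -- F a < 0
      have hFa_neg : (∫ s in Set.Ioi a, f s) < 0 := by
        have hsplit' := hsplit a x₀ ha hax₀.le
        have hTub : x₀ ^ (-n) + (n * u + 1) / (-c₀) ≤ T := le_max_left _ _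
        have hc0ne : c₀ ≠ 0 := ne_of_lt hc₀
        have hq : c₀ * ((n * u + 1) / (-c₀)) = -(n * u + 1) := by
          rw [div_neg, mul_neg, mul_comm, div_mul_cancel₀ _ hc0ne]
        have hstep : c₀ * ((T + 1 - x₀ ^ (-n)) / n) < -u := by
          have h1 : (n * u + 1) / (-c₀) + 1 ≤ T + 1 - x₀ ^ (-n) := by linarith
          have h2 : c₀ * (T + 1 - x₀ ^ (-n)) ≤ c₀ * ((n * u + 1) / (-c₀) + 1) :=
            mul_le_mul_of_nonpos_left h1 (le_of_lt hc₀)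
          have h3 : c₀ * ((n * u + 1) / (-c₀) + 1) = -(n * u + 1) + c₀ := by
            rw [mul_add, hq]; ring
          have h4 : c₀ * (T + 1 - x₀ ^ (-n)) < -(n * u) := by
            rw [h3] at h2; linarith
          rw [mul_div_assoc'] ; rw [div_lt_iff₀ hn]
          linarith [h4]
        rw [hsplit', ← hudef]
        linarith [hbound, hstep]
      -- F b > 0
      set b' : ℝ := max a M + 1 with hb'def
      have hb'a : a < b' := by
        have := le_max_left a M; rw [hb'def]; linarith
      have hb'0 : (0 : ℝ) < b' := lt_trans ha hb'a
      have hFb_pos : 0 < ∫ s in Set.Ioi b', f s := by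
        refine hpos b' hb'0 fun s hs => ?_
        have hsM : M ≤ s := by
          have h1 : M ≤ max a M := le_max_right _ _
          have : b' < s := hs
          rw [hb'def] at this
          linarith
        linarith [hM s hsM]
      -- IVT
      have hcont : ContinuousOn (fun x => ∫ s in Set.Ioi x, f s) (Set.Icc a b') := by
        have hIcc : IntegrableOn f (Set.Icc a b') := by
          refine (hfi (a / 2) (by linarith)).mono_set ?_
          intro s hs
          have : a ≤ s := hs.1
          exact Set.mem_Ioi.2 (by linarith)
        have hprim : ContinuousOn (fun x => ∫ t in Set.Ioc a x, f t) (Set.Icc a b') :=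
          intervalIntegral.continuousOn_primitive hIcc
        have heqn : ∀ x ∈ Set.Icc a b', (∫ s in Set.Ioi x, f s)
            = (∫ s in Set.Ioi a, f s) - ∫ t in Set.Ioc a x, f t := by
          intro x hx
          have := hsplit a x ha hx.1
          linarith
        exact (ContinuousOn.sub (continuousOn_const (c := ∫ s in Set.Ioi a, f s)) hprim).congr
          heqn
      have h0mem : (0 : ℝ) ∈ Set.Icc (∫ s in Set.Ioi a, f s) (∫ s in Set.Ioi b', f s) :=
        ⟨le_of_lt hFa_neg, le_of_lt hFb_pos⟩
      obtain ⟨δ, hδmem, hδeq⟩ := intermediate_value_Icc hb'a.le hcont h0mem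
      exact ⟨δ, lt_of_lt_of_le ha hδmem.1, hδeq⟩
  · intro δ δ' hδ hF hδ' hF'
    rcases lt_trichotomy δ δ' with hlt | heq | hgt
    · exact absurd (key2' δ δ' hδ hlt hF hF') (fun x => x)
    · exact heq
    · exact absurd (key2' δ' δ hδ' hgt hF' hF) (fun x => x)
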